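/- arXiv:2206.06835 — 2 statements merged into one kernel-verified Lean document; each statement's English description precedes it below -/
import Mathlib

section
/- Let p be a prime, s ≥ 1, and q = p^s. Let P, Q ∈ ℤ[x₁, …, x_N] each have degree at most 1 in each variable and have every coefficient equal to 0 or 1. Then the coefficient of (x₁⋯x_N)^{q−1} in (PQ)^{q−1} is congruent modulo p to the s-th power of the coefficient of (x₁⋯x_N)^{p−1} in (PQ)^{p−1}. -/
open MvPolynomial

variable {N : ℕ} {p : ℕ}

-- Frobenius: f ^ p = expand p f over ZMod p
lemma pow_p_eq_expand [Fact p.Prime] (f : MvPolynomial (Fin N) (ZMod p)) :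
    f ^ p = expand p f := by
  induction f using MvPolynomial.induction_on with
  | C a => rw [expand_C, ← C_pow, ZMod.pow_card]
  | add f g hf hg => rw [add_pow_char, map_add, hf, hg]
  | mul_X f i hf => rw [mul_pow, map_mul, hf, expand_X]

lemma expand_as_sum [Fact p.Prime] (f : MvPolynomial (Fin N) (ZMod p)) :
    expand p f = ∑ d ∈ f.support, monomial (p • d) (f.coeff d) := by
  conv_lhs => rw [f.as_sum]
  rw [map_sum]
  refine Finset.sum_congr rfl fun d _ => ?_
  rw [expand_monomial]

lemma coeff_expand_dvd [Fact p.Prime] (f : MvPolynomial (Fin N) (ZMod p)) (b : Fin N →₀ ℕ)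
    (hb : (expand p f).coeff b ≠ 0) : ∀ j, p ∣ b j := by
  rw [expand_as_sum, coeff_sum] at hb
  obtain ⟨d, _, hd⟩ := Finset.exists_ne_zero_of_sum_ne_zero hb
  rw [coeff_monomial] at hd
  intro j
  split at hd
  · subst ‹p • d = b›; exact ⟨d j, rfl⟩
  · exact absurd rfl hd

lemma coeff_expand_smul [Fact p.Prime] (f : MvPolynomial (Fin N) (ZMod p)) (d : Fin N →₀ ℕ) :
    (expand p f).coeff (p • d) = f.coeff d := by
  rw [expand_as_sum, coeff_sum]
  have hinj : ∀ d' : Fin N →₀ ℕ, p • d' = p • d → d' = d := by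
    intro d' h
    ext j
    have := congrArg (fun g : Fin N →₀ ℕ => g j) h
    simp only [Finsupp.smul_apply, smul_eq_mul] at this
    exact Nat.eq_of_mul_eq_mul_left (Fact.out : p.Prime).pos this
  rw [Finset.sum_eq_single d]
  · rw [coeff_monomial, if_pos rfl]
  · intro d' _ hne
    rw [coeff_monomial, if_neg (fun h => hne (hinj d' h))]
  · intro hd
    rw [coeff_monomial, if_pos rfl, MvPolynomial.notMem_support_iff.mp hd]

lemma key_step [Fact p.Prime] (f g : MvPolynomial (Fin N) (ZMod p))
    (hf : ∀ j, f.degreeOf j ≤ 2) (q : ℕ) (hq : 1 ≤ q) :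
    (f ^ (p - 1) * expand p g).coeff (Finsupp.equivFunOnFinite.symm fun _ => p * q - 1)
      = (f ^ (p - 1)).coeff (Finsupp.equivFunOnFinite.symm fun _ => p - 1)
        * g.coeff (Finsupp.equivFunOnFinite.symm fun _ => q - 1) := by
  have hp : 2 ≤ p := (Fact.out : p.Prime).two_le
  have hpq : p ≤ p * q := Nat.le_mul_of_pos_right p hq
  set dp : Fin N →₀ ℕ := Finsupp.equivFunOnFinite.symm fun _ => p - 1 with hdp
  set dq : Fin N →₀ ℕ := Finsupp.equivFunOnFinite.symm fun _ => p * (q - 1) with hdq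
  set d : Fin N →₀ ℕ := Finsupp.equivFunOnFinite.symm fun _ => p * q - 1 with hd
  have hdpj : ∀ j, dp j = p - 1 := fun j => rfl
  have hdqj : ∀ j, dq j = p * (q - 1) := fun j => rfl
  have hdj : ∀ j, d j = p * q - 1 := fun j => rfl
  have hsum : dp + dq = d := by
    ext j
    rw [Finsupp.add_apply, hdpj, hdqj, hdj, Nat.mul_sub]
    omega
  have hsmul : p • (Finsupp.equivFunOnFinite.symm fun _ : Fin N => q - 1) = dq := by
    ext j; rfl
  rw [MvPolynomial.coeff_mul]
  rw [Finset.sum_eq_single (dp, dq)]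
  · rw [← hsmul, _root_.coeff_expand_smul]
  · rintro ⟨a, b⟩ hab hne
    rw [Finset.HasAntidiagonal.mem_antidiagonal] at hab
    by_contra hcon
    have ha : (f ^ (p - 1)).coeff a ≠ 0 := fun h => hcon (by rw [h, zero_mul])
    have hb : (expand p g).coeff b ≠ 0 := fun h => hcon (by rw [h, mul_zero])
    have haj : ∀ j, a j ≤ (p - 1) * 2 := by
      intro j
      calc a j ≤ (f ^ (p - 1)).degreeOf j :=
            monomial_le_degreeOf j (MvPolynomial.mem_support_iff.mpr ha)
        _ ≤ (p - 1) * f.degreeOf j := degreeOf_pow_le j f (p - 1)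
        _ ≤ (p - 1) * 2 := Nat.mul_le_mul_left _ (hf j)
    have hbj := coeff_expand_dvd g b hb
    have haeq : a = dp := by
      ext j
      have h1 : a j + b j = p * q - 1 := by
        have := congrArg (fun g : Fin N →₀ ℕ => g j) hab
        simpa [Finsupp.add_apply, hdj] using this
      have h2 : p ∣ a j + 1 := by
        have hd1 : p ∣ a j + 1 + b j := by
          rw [show a j + 1 + b j = p * q by omega]; exact ⟨q, rfl⟩
        have := Nat.dvd_sub hd1 (hbj j)
        rwa [Nat.add_sub_cancel] at this
      obtain ⟨t, ht⟩ := h2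
      have haj' := haj j
      have ht1 : t = 1 := by
        rcases Nat.lt_or_ge t 2 with h | h
        · interval_cases t <;> omega
        · have := Nat.mul_le_mul_left p h
          omega
      subst ht1
      rw [hdpj]
      omega
    have hbeq : b = dq := by
      have := hab
      rw [haeq, ← hsum] at this
      exact add_left_cancel this
    exact hne (by rw [haeq, hbeq])
  · intro h
    exact absurd (Finset.HasAntidiagonal.mem_antidiagonal.mpr hsum) h

lemma key [Fact p.Prime] (f : MvPolynomial (Fin N) (ZMod p))
    (hf : ∀ j, f.degreeOf j ≤ 2) :
    ∀ s, 1 ≤ s →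
      (f ^ (p ^ s - 1)).coeff (Finsupp.equivFunOnFinite.symm fun _ => p ^ s - 1)
        = ((f ^ (p - 1)).coeff (Finsupp.equivFunOnFinite.symm fun _ => p - 1)) ^ s := by
  intro s hs
  induction s, hs using Nat.le_induction with
  | base => simp [pow_one]
  | succ s hs ih =>
    have hp : 2 ≤ p := (Fact.out : p.Prime).two_le
    have hq : 1 ≤ p ^ s := Nat.one_le_pow _ _ (by omega)
    have h1 : p ^ (s + 1) - 1 = p * p ^ s - 1 := by
      rw [pow_succ, Nat.mul_comm]
    have hfac : f ^ (p * p ^ s - 1) = f ^ (p - 1) * expand p (f ^ (p ^ s - 1)) := by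
      have hsplit : p * p ^ s - 1 = (p - 1) + p * (p ^ s - 1) := by
        rw [Nat.mul_sub]
        have : p ≤ p * p ^ s := Nat.le_mul_of_pos_right p hq
        omega
      rw [hsplit, pow_add, pow_mul', pow_p_eq_expand]
    rw [h1, hfac, key_step f (f ^ (p ^ s - 1)) hf (p ^ s) hq, ih, pow_succ, mul_comm]

/-- Let `p` be a prime, `s ≥ 1`, `q = p^s`. Let `P, Q ∈ ℤ[x₁,…,x_N]` be
linear in each variable with all coefficients `0` or `1`. Then the coefficient of
`(x₁⋯x_N)^{q−1}` in `(PQ)^{q−1}` is congruent mod `p` to the `s`-th power of the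
coefficient of `(x₁⋯x_N)^{p−1}` in `(PQ)^{p−1}`. -/
theorem statement3 (p s N : ℕ) [Fact p.Prime] (hs : 1 ≤ s)
    (P Q : MvPolynomial (Fin N) ℤ)
    (hPlin : ∀ j, P.degreeOf j ≤ 1) (hQlin : ∀ j, Q.degreeOf j ≤ 1)
    (hPcoeff : ∀ d, P.coeff d = 0 ∨ P.coeff d = 1)
    (hQcoeff : ∀ d, Q.coeff d = 0 ∨ Q.coeff d = 1) :
    ((((P * Q) ^ (p ^ s - 1)).coeff
        (Finsupp.equivFunOnFinite.symm fun _ => p ^ s - 1) : ℤ) : ZMod p)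
      = ((((P * Q) ^ (p - 1)).coeff
        (Finsupp.equivFunOnFinite.symm fun _ => p - 1) : ℤ) : ZMod p) ^ s := by
  set φ := Int.castRingHom (ZMod p)
  set f := MvPolynomial.map φ (P * Q) with hfdef
  have hcast : ∀ (n : ℕ) (d : Fin N →₀ ℕ),
      ((((P * Q) ^ n).coeff d : ℤ) : ZMod p) = (f ^ n).coeff d := by
    intro n d
    rw [hfdef, ← map_pow, MvPolynomial.coeff_map]
    rfl
  rw [hcast, hcast]
  have hf : ∀ j, f.degreeOf j ≤ 2 := by
    intro j
    rw [MvPolynomial.degreeOf_le_iff]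
    intro m hm
    have hm' : (P * Q).coeff m ≠ 0 := by
      intro h
      rw [MvPolynomial.mem_support_iff, hfdef, MvPolynomial.coeff_map, h] at hm
      exact hm (map_zero φ)
    calc m j ≤ (P * Q).degreeOf j :=
          monomial_le_degreeOf j (MvPolynomial.mem_support_iff.mpr hm')
      _ ≤ P.degreeOf j + Q.degreeOf j := degreeOf_mul_le j P Q
      _ ≤ 2 := by have := hPlin j; have := hQlin j; omega
  exact key f hf s hs
end

section
/- Let p be a prime and i ≥ 0. Let P ∈ ℤ[x₁, …, x_N] have degree at most 1 in each variable and have every coefficient equal to 0 or 1. Let m be a monomial whose coefficient in P^{p^i} is nonzero. If every variable appears in m with exponent 0 or p^i, then the coefficient of m in P^{p^i} is congruent to 1 modulo p. -/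
open MvPolynomial

private lemma coeff_pow_smul (N : ℕ) (P : MvPolynomial (Fin N) ℤ)
    (hlin : ∀ j, P.degreeOf j ≤ 1) (m' : Fin N →₀ ℕ) (hm' : ∀ j, m' j ≤ 1) :
    ∀ n : ℕ, (P ^ n).coeff (n • m') = (P.coeff m') ^ n := by
  intro n
  induction n with
  | zero => simp
  | succ n ih =>
    rw [pow_succ, MvPolynomial.coeff_mul]
    rw [Finset.sum_eq_single (n • m', m')]
    · rw [ih, pow_succ]
    · rintro ⟨a, b⟩ hab hne
      rw [Finset.HasAntidiagonal.mem_antidiagonal] at hab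
      by_contra h
      have ha : (P ^ n).coeff a ≠ 0 := fun h0 => h (by simp [h0])
      have hb : P.coeff b ≠ 0 := fun h0 => h (by simp [h0])
      have haj : ∀ j, a j ≤ n := by
        intro j
        have h1 : a j ≤ (P ^ n).degreeOf j :=
          MvPolynomial.degreeOf_le_iff.mp le_rfl a (MvPolynomial.mem_support_iff.mpr ha)
        calc a j ≤ (P ^ n).degreeOf j := h1
          _ ≤ n * P.degreeOf j := MvPolynomial.degreeOf_pow_le j P n
          _ ≤ n * 1 := Nat.mul_le_mul_left n (hlin j)
          _ = n := Nat.mul_one n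
      have hbj : ∀ j, b j ≤ 1 := by
        intro j
        have h1 : b j ≤ P.degreeOf j :=
          MvPolynomial.degreeOf_le_iff.mp le_rfl b (MvPolynomial.mem_support_iff.mpr hb)
        exact h1.trans (hlin j)
      have key : ∀ j, a j = n * m' j ∧ b j = m' j := by
        intro j
        have hsum : a j + b j = (n + 1) * m' j := by
          have := DFunLike.congr_fun hab j
          simpa [Finsupp.smul_apply] using this
        have h2 := haj j
        have h3 := hbj j
        rcases Nat.le_one_iff_eq_zero_or_eq_one.mp (hm' j) with h0 | h1
        · simp [h0] at hsum ⊢; omega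
        · rw [h1] at hsum ⊢; omega
      apply hne
      have ha' : a = n • m' := by
        ext j; simpa [Finsupp.smul_apply] using (key j).1
      have hb' : b = m' := by ext j; exact (key j).2
      rw [ha', hb']
    · intro h
      exact absurd (Finset.HasAntidiagonal.mem_antidiagonal.mpr (by rw [succ_nsmul])) h

/-- Let `p` be prime, `i ≥ 0`, and `P ∈ ℤ[x₁,…,x_N]` linear in each
variable with all coefficients `0` or `1`. If a monomial `m` with nonzero coefficient in
`P^{p^i}` has every variable's exponent equal to `0` or `p^i`, then the coefficient of
`m` in `P^{p^i}` is `≡ 1 (mod p)`. -/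
theorem statement5 (p i N : ℕ) [Fact p.Prime]
    (P : MvPolynomial (Fin N) ℤ)
    (hlin : ∀ j, P.degreeOf j ≤ 1)
    (hcoeff : ∀ d, P.coeff d = 0 ∨ P.coeff d = 1)
    (m : Fin N →₀ ℕ)
    (hm : (P ^ p ^ i).coeff m ≠ 0)
    (hvar : ∀ j, m j = 0 ∨ m j = p ^ i) :
    (((P ^ p ^ i).coeff m : ℤ) : ZMod p) = 1 := by
  have hp : 0 < p ^ i := Nat.pow_pos (Fact.out (p := p.Prime)).pos
  set n := p ^ i with hn
  set m' : Fin N →₀ ℕ := m.mapRange (· / n) (Nat.zero_div n) with hm'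
  have hmle : ∀ j, m' j ≤ 1 := by
    intro j
    simp only [hm', Finsupp.mapRange_apply]
    rcases hvar j with h | h
    · simp [h]
    · simp [h, Nat.div_self hp]
  have hmeq : m = n • m' := by
    ext j
    simp only [hm', Finsupp.smul_apply, Finsupp.mapRange_apply]
    rcases hvar j with h | h
    · simp [h]
    · simp [h, Nat.div_self hp]
  rw [hmeq] at hm ⊢
  rw [coeff_pow_smul N P hlin m' hmle n] at hm ⊢
  rcases hcoeff m' with h | h
  · exact absurd (by rw [h, zero_pow hp.ne']) hm
  · rw [h, one_pow]; push_cast; rfl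
end
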